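/- arXiv:1504.04209 — 2 statements merged into one kernel-verified Lean document; each statement's English description precedes it below -/
import Mathlib

section
/- Let Y ⊆ ℂⁿ be a set whose 2(n−k)-dimensional Hausdorff measure is zero (0 ≤ k < n−1), and let X = {z ∈ ℂⁿ : z_{k+1} = ⋯ = z_n = 0}. Define q : ℂⁿ \ X → ℂP^{n-k-1} by q(z) = [z_{k+1} : ⋯ : z_n]. Then for almost every point p of ℂP^{n-k-1} (with respect to the (2(n-k)-2)-dimensional Hausdorff measure), the fiber q⁻¹(p) ∩ Y has 2-dimensional Hausdorff measure zero. -/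
open MeasureTheory

open MeasureTheory EMetric Set
open scoped ENNReal NNReal

noncomputable section SliceAux

/-- The scale-`r` Hausdorff pre-measure content used in `hausdorffMeasure_apply`. -/
def hausCover {X : Type*} [EMetricSpace X] (s : Set X) (r : ℝ≥0∞) (d : ℝ) : ℝ≥0∞ :=
  ⨅ (t : ℕ → Set X) (_ : s ⊆ ⋃ n, t n) (_ : ∀ n, diam (t n) ≤ r),
    ∑' n, ⨆ _ : (t n).Nonempty, diam (t n) ^ d

theorem hausCover_def {X : Type*} [EMetricSpace X] (s : Set X) (r : ℝ≥0∞) (d : ℝ) :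
    hausCover s r d =
      ⨅ (t : ℕ → Set X) (_ : s ⊆ ⋃ n, t n) (_ : ∀ n, diam (t n) ≤ r),
        ∑' n, ⨆ _ : (t n).Nonempty, diam (t n) ^ d := rfl

theorem hausdorffMeasure_eq_hausCover {X : Type*} [EMetricSpace X] [MeasurableSpace X]
    [BorelSpace X] (d : ℝ) (s : Set X) :
    μH[d] s = ⨆ (r : ℝ≥0∞) (_ : 0 < r), hausCover s r d :=
  MeasureTheory.Measure.hausdorffMeasure_apply d s

/-- Eilenberg-type inequality consequence: if `A` has zero Hausdorff measure in dimension
`2 + 2 * card ι` and `f` is Lipschitz on `A` into `ι → ℂ`, then almost every fiber of `f`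
through `A` has zero `2`-dimensional Hausdorff measure. -/
theorem eil {X : Type*} [MetricSpace X] [MeasurableSpace X] [BorelSpace X]
    {ι : Type*} [Fintype ι] [Nonempty ι] {A : Set X} {f : X → ι → ℂ} {L : ℝ≥0}
    (hf : LipschitzOnWith L f A)
    (hA : μH[(2 + 2 * (Fintype.card ι : ℝ))] A = 0) :
    ∀ᵐ v ∂(volume : Measure (ι → ℂ)), μH[(2 : ℝ)] (A ∩ f ⁻¹' {v}) = 0 := by
  classical
  set d : ℝ := 2 + 2 * (Fintype.card ι : ℝ) with hd
  have hd0 : (0 : ℝ) < d := by positivity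
  set DN : ℕ := Module.finrank ℝ (ι → ℂ) with hDN
  have hDNcard : (DN : ℝ) = 2 * (Fintype.card ι : ℝ) := by
    rw [hDN]
    simp [Module.finrank_pi_fintype, Complex.finrank_real_complex]
    push_cast
    ring
  have hdDN : d = 2 + (DN : ℝ) := by rw [hd, hDNcard]
  set c : ℝ≥0∞ := volume (Metric.closedBall (0 : ι → ℂ) 1) with hc
  have hc_top : c ≠ ∞ := (MeasureTheory.measure_closedBall_lt_top).ne
  -- the scale-level inf of A is zero
  have hA0 : ∀ r : ℝ≥0∞, 0 < r → hausCover A r d = 0 := by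
    intro r hr
    refine le_antisymm ?_ (zero_le)
    rw [← hA, hausdorffMeasure_eq_hausCover]
    exact le_iSup₂ (f := fun (r : ℝ≥0∞) (_ : 0 < r) => hausCover A r d) r hr
  have key : ∀ r : ℝ≥0∞, 0 < r → r ≠ ∞ → ∀ δ : ℝ≥0∞, 0 < δ →
      ∃ g : (ι → ℂ) → ℝ≥0∞, Measurable g ∧ (∫⁻ v, g v) ≤ δ ∧
        ∀ v, hausCover (A ∩ f ⁻¹' {v}) r (2 : ℝ) ≤ g v := by
    intro r hr hrtop δ hδ
    set C : ℝ≥0∞ := c * (L : ℝ≥0∞) ^ DN + 1 with hC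
    have hC0 : C ≠ 0 := by simp [hC]
    have hCtop : C ≠ ∞ := by
      refine ENNReal.add_ne_top.mpr ⟨ENNReal.mul_ne_top hc_top ?_, ENNReal.one_ne_top⟩
      exact ENNReal.pow_ne_top ENNReal.coe_ne_top
    set ε : ℝ≥0∞ := δ / C with hε
    have hε0 : 0 < ε := ENNReal.div_pos hδ.ne' hCtop
    have h1 : hausCover A r d < ε := by rw [hA0 r hr]; exact hε0
    rw [hausCover_def] at h1
    obtain ⟨t, h2⟩ := iInf_lt_iff.mp h1
    obtain ⟨hcov, h3⟩ := iInf_lt_iff.mp h2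
    obtain ⟨hdiam, hsum⟩ := iInf_lt_iff.mp h3
    have hsum' : ∑' n, diam (t n) ^ d ≤ ε := by
      refine le_trans (le_of_eq (tsum_congr fun n => ?_)) hsum.le
      rcases (t n).eq_empty_or_nonempty with h | h
      · simp [h, diam_empty, ENNReal.zero_rpow_of_pos hd0]
        exact Or.inl ⟨diam_empty, hd0⟩
      · rw [iSup_pos h]
    have hdiam_top : ∀ n, diam (t n) ≠ ∞ :=
      fun n => ((hdiam n).trans_lt (lt_top_iff_ne_top.mpr hrtop)).ne
    set ctr : ℕ → (ι → ℂ) := fun n => if h : (t n ∩ A).Nonempty then f h.choose else 0 with hctr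
    set ρ : ℕ → ℝ := fun n => (L : ℝ) * (diam (t n)).toReal with hρ
    have hρ0 : ∀ n, 0 ≤ ρ n := fun n => mul_nonneg L.coe_nonneg ENNReal.toReal_nonneg
    set g : (ι → ℂ) → ℝ≥0∞ := fun v =>
      ∑' n, (Metric.closedBall (ctr n) (ρ n)).indicator (fun _ => diam (t n) ^ (2 : ℝ)) v with hg
    refine ⟨g, ?_, ?_, ?_⟩
    · exact Measurable.ennreal_tsum fun n =>
        Measurable.indicator measurable_const measurableSet_closedBall
    · have hint : (∫⁻ v, g v) =
          ∑' n, diam (t n) ^ (2 : ℝ) * volume (Metric.closedBall (ctr n) (ρ n)) := by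
        rw [hg, lintegral_tsum fun n =>
          (Measurable.indicator measurable_const measurableSet_closedBall).aemeasurable]
        refine tsum_congr fun n => ?_
        rw [lintegral_indicator_const measurableSet_closedBall]
      rw [hint]
      have hterm : ∀ n, diam (t n) ^ (2 : ℝ) * volume (Metric.closedBall (ctr n) (ρ n)) ≤
          (c * (L : ℝ≥0∞) ^ DN) * diam (t n) ^ d := by
        intro n
        rw [Measure.addHaar_closedBall' volume (ctr n) (hρ0 n)]
        have hball : ENNReal.ofReal (ρ n ^ Module.finrank ℝ (ι → ℂ)) =
            (L : ℝ≥0∞) ^ DN * diam (t n) ^ DN := by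
          rw [← hDN, hρ, mul_pow, ENNReal.ofReal_mul (by positivity),
            ENNReal.ofReal_pow L.coe_nonneg, ENNReal.ofReal_pow ENNReal.toReal_nonneg,
            ENNReal.ofReal_coe_nnreal, ENNReal.ofReal_toReal (hdiam_top n)]
        rw [hball]
        refine le_of_eq ?_
        have hpow : diam (t n) ^ (2 : ℝ) * diam (t n) ^ DN = diam (t n) ^ d := by
          rw [← ENNReal.rpow_natCast (diam (t n)) DN,
            ← ENNReal.rpow_add_of_nonneg 2 (DN : ℝ) (by norm_num) (by positivity), ← hdDN]
        calc diam (t n) ^ (2 : ℝ) * ((L : ℝ≥0∞) ^ DN * diam (t n) ^ DN * c)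
            = c * (L : ℝ≥0∞) ^ DN * (diam (t n) ^ (2 : ℝ) * diam (t n) ^ DN) := by ring
          _ = c * (L : ℝ≥0∞) ^ DN * diam (t n) ^ d := by rw [hpow]
      calc ∑' n, diam (t n) ^ (2 : ℝ) * volume (Metric.closedBall (ctr n) (ρ n))
          ≤ ∑' n, (c * (L : ℝ≥0∞) ^ DN) * diam (t n) ^ d := ENNReal.tsum_le_tsum hterm
        _ = (c * (L : ℝ≥0∞) ^ DN) * ∑' n, diam (t n) ^ d := ENNReal.tsum_mul_left
        _ ≤ C * ε := by
            refine mul_le_mul' ?_ hsum'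
            rw [hC]; exact le_self_add
        _ ≤ δ := by rw [hε]; exact ENNReal.mul_div_le
    · intro v
      set t' : ℕ → Set X := fun n => t n ∩ (A ∩ f ⁻¹' {v}) with ht'
      have hstep1 : hausCover (A ∩ f ⁻¹' {v}) r 2 ≤
          ∑' n, ⨆ _ : (t' n).Nonempty, diam (t' n) ^ (2 : ℝ) := by
        rw [hausCover_def]
        refine iInf_le_of_le t' (iInf_le_of_le ?_ (iInf_le_of_le ?_ le_rfl))
        · intro x hx
          obtain ⟨n, hn⟩ := mem_iUnion.mp (hcov hx.1)
          exact mem_iUnion.mpr ⟨n, ⟨hn, hx⟩⟩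
        · exact fun n => le_trans (diam_mono inter_subset_left) (hdiam n)
      refine hstep1.trans ?_
      rw [hg]
      refine ENNReal.tsum_le_tsum fun n => iSup_le fun hne => ?_
      obtain ⟨z, hzt, hzA, hzv⟩ := hne
      rw [mem_preimage, mem_singleton_iff] at hzv
      have hne' : (t n ∩ A).Nonempty := ⟨z, hzt, hzA⟩
      have hx := hne'.choose_spec
      have hmem : v ∈ Metric.closedBall (ctr n) (ρ n) := by
        have h1 : edist v (f hne'.choose) ≤ (L : ℝ≥0∞) * diam (t n) := by
          rw [← hzv]
          exact (hf hzA hx.2).trans (mul_le_mul_right (edist_le_diam_of_mem hzt hx.1) _)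
        have hfin : (L : ℝ≥0∞) * diam (t n) ≠ ∞ :=
          ENNReal.mul_ne_top ENNReal.coe_ne_top (hdiam_top n)
        rw [Metric.mem_closedBall]
        have h2 : dist v (f hne'.choose) ≤ ρ n := by
          rw [dist_edist]
          calc (edist v (f hne'.choose)).toReal ≤ ((L : ℝ≥0∞) * diam (t n)).toReal :=
              ENNReal.toReal_mono hfin h1
            _ = ρ n := by rw [ENNReal.toReal_mul, ENNReal.coe_toReal]
        simpa [hctr, dif_pos hne'] using h2
      rw [Set.indicator_of_mem hmem]
      exact ENNReal.rpow_le_rpow (diam_mono inter_subset_left) (by norm_num)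
  -- per-scale a.e. statement
  have scale : ∀ q : ℕ, ∀ᵐ v ∂(volume : Measure (ι → ℂ)),
      hausCover (A ∩ f ⁻¹' {v}) ((q : ℝ≥0∞) + 1)⁻¹ (2 : ℝ) = 0 := by
    intro q
    have hr0 : (0 : ℝ≥0∞) < ((q : ℝ≥0∞) + 1)⁻¹ := ENNReal.inv_pos.mpr (by
      exact ENNReal.add_ne_top.mpr ⟨ENNReal.natCast_ne_top q, ENNReal.one_ne_top⟩)
    have hrt : ((q : ℝ≥0∞) + 1)⁻¹ ≠ ∞ := ENNReal.inv_ne_top.mpr (by simp)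
    choose g hmeas hint hle using fun j : ℕ =>
      key _ hr0 hrt ((j : ℝ≥0∞) + 1)⁻¹ (ENNReal.inv_pos.mpr (by
        exact ENNReal.add_ne_top.mpr ⟨ENNReal.natCast_ne_top j, ENNReal.one_ne_top⟩))
    set h : (ι → ℂ) → ℝ≥0∞ := fun v => ⨅ j, g j v with hh
    have hmeas' : Measurable h := Measurable.iInf hmeas
    have hint' : (∫⁻ v, h v) = 0 := by
      refine le_antisymm ?_ (zero_le)
      have h2 : ∀ j : ℕ, (∫⁻ v, h v) ≤ ((j : ℝ≥0∞) + 1)⁻¹ := fun j =>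
        (lintegral_mono fun v => iInf_le _ j).trans (hint j)
      have h3 : (⨅ j : ℕ, ((j : ℝ≥0∞) + 1)⁻¹) = 0 := by
        rw [← ENNReal.inv_iSup]
        rw [ENNReal.inv_eq_zero]
        refine top_unique ?_
        rw [← ENNReal.iSup_natCast]
        exact iSup_mono fun j => le_self_add
      rw [← h3]
      exact le_iInf h2
    filter_upwards [(lintegral_eq_zero_iff hmeas').mp hint'] with v hv
    refine le_antisymm ?_ (zero_le)
    have : h v = 0 := hv
    rw [← this]
    exact le_iInf fun j => hle j v
  filter_upwards [ae_all_iff.mpr scale] with v hv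
  rw [hausdorffMeasure_eq_hausCover]
  refine le_antisymm (iSup₂_le fun r hr => ?_) (zero_le)
  obtain ⟨q, hq⟩ := ENNReal.exists_inv_nat_lt hr.ne'
  have hq' : ((q : ℝ≥0∞) + 1)⁻¹ ≤ r :=
    le_trans (ENNReal.inv_le_inv.mpr le_self_add) hq.le
  refine le_trans ?_ (hv q).le
  rw [hausCover_def, hausCover_def]
  refine le_iInf fun t => le_iInf fun hcov2 => le_iInf fun hdiam2 => ?_
  exact iInf_le_of_le t (iInf_le_of_le hcov2
    (iInf_le_of_le (fun n => (hdiam2 n).trans hq') le_rfl))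

end SliceAux

theorem keyM {X : Type*} [MetricSpace X] [MeasurableSpace X] [BorelSpace X]
    {ι : Type*} [Fintype ι] (hcard : 2 ≤ Fintype.card ι)
    {τ : X → ι → ℂ} (hτ : LipschitzWith 1 τ) {Y : Set X}
    (hY : μH[(2 * (Fintype.card ι : ℝ))] Y = 0) :
    ∀ᵐ w ∂(volume : Measure (ι → ℂ)),
      μH[(2 : ℝ)] (Y ∩ {z | τ z ≠ 0 ∧ ∃ t : ℂ, t ≠ 0 ∧ τ z = t • w}) = 0 := by
  classical
  haveI hne : Nonempty ι := Fintype.card_pos_iff.mp (by omega)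
  have hsubne : ∀ i : ι, Nonempty {j : ι // j ≠ i} := fun i => by
    obtain ⟨j, hj⟩ := Fintype.exists_ne_of_one_lt_card (by omega) i
    exact ⟨⟨j, hj⟩⟩
  have hsubcard : ∀ i : ι,
      (2 : ℝ) + 2 * (Fintype.card {j : ι // j ≠ i} : ℝ) = 2 * (Fintype.card ι : ℝ) := by
    intro i
    have h1 : Fintype.card {j : ι // j ≠ i} = Fintype.card ι - 1 := by
      simp [Fintype.card_subtype_compl]
    rw [h1]
    have h2 : (((Fintype.card ι - 1 : ℕ)) : ℝ) = (Fintype.card ι : ℝ) - 1 := by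
      have h3 : (1 : ℕ) ≤ Fintype.card ι := by omega
      push_cast [Nat.cast_sub h3]
      ring
    rw [h2]; ring
  have main : ∀ i : ι, ∃ N : Set ({j : ι // j ≠ i} → ℂ), MeasurableSet N ∧ volume N = 0 ∧
      ∀ v, v ∉ N → μH[(2 : ℝ)]
        (Y ∩ {z | τ z i ≠ 0} ∩ (fun z (j : {j : ι // j ≠ i}) => τ z j.1 / τ z i) ⁻¹' {v}) = 0 := by
    intro i
    haveI := hsubne i
    set F : X → {j : ι // j ≠ i} → ℂ := fun z j => τ z j.1 / τ z i with hF
    set A : ℕ → ℕ → Set X := fun a b =>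
      Y ∩ {z | 1 / ((a : ℝ) + 1) ≤ ‖τ z i‖ ∧ ‖τ z‖ ≤ b} with hA
    have hae : ∀ a b : ℕ, ∀ᵐ v ∂(volume : Measure ({j : ι // j ≠ i} → ℂ)),
        μH[(2 : ℝ)] (A a b ∩ F ⁻¹' {v}) = 0 := by
      intro a b
      set K : ℝ≥0 := Real.toNNReal (2 * b * ((a : ℝ) + 1) ^ 2) with hK
      have hKval : (K : ℝ) = 2 * b * ((a : ℝ) + 1) ^ 2 :=
        Real.coe_toNNReal _ (by positivity)
      have hL : LipschitzOnWith K F (A a b) := by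
        refine LipschitzOnWith.of_dist_le_mul fun z hz z' hz' => ?_
        refine (dist_pi_le_iff (mul_nonneg K.coe_nonneg dist_nonneg)).mpr fun j => ?_
        obtain ⟨hzY, hz1, hz2⟩ := hz
        obtain ⟨hz'Y, hz'1, hz'2⟩ := hz'
        have ha0 : (0 : ℝ) < 1 / ((a : ℝ) + 1) := by positivity
        have hs0 : τ z i ≠ 0 := by
          intro h; rw [h] at hz1; simp at hz1; nlinarith
        have hs'0 : τ z' i ≠ 0 := by
          intro h; rw [h] at hz'1; simp at hz'1; nlinarith
        have hnum : ‖τ z j.1 * τ z' i - τ z i * τ z' j.1‖ ≤ 2 * b * dist z z' := by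
          have hre : τ z j.1 * τ z' i - τ z i * τ z' j.1 =
              (τ z j.1 - τ z' j.1) * τ z' i + τ z' j.1 * (τ z' i - τ z i) := by ring
          rw [hre]
          have hb1 : ‖τ z' i‖ ≤ (b : ℝ) := (norm_le_pi_norm (τ z') i).trans hz'2
          have hb2 : ‖τ z' j.1‖ ≤ (b : ℝ) := (norm_le_pi_norm (τ z') j.1).trans hz'2
          have hd1 : ‖τ z j.1 - τ z' j.1‖ ≤ dist z z' := by
            rw [← dist_eq_norm]
            exact (dist_le_pi_dist (τ z) (τ z') j.1).trans (by simpa using hτ.dist_le_mul z z')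
          have hd2 : ‖τ z' i - τ z i‖ ≤ dist z z' := by
            rw [← dist_eq_norm, dist_comm]
            exact (dist_le_pi_dist (τ z) (τ z') i).trans (by simpa using hτ.dist_le_mul z z')
          calc ‖(τ z j.1 - τ z' j.1) * τ z' i + τ z' j.1 * (τ z' i - τ z i)‖
              ≤ ‖(τ z j.1 - τ z' j.1) * τ z' i‖ + ‖τ z' j.1 * (τ z' i - τ z i)‖ := norm_add_le _ _
            _ = ‖τ z j.1 - τ z' j.1‖ * ‖τ z' i‖ + ‖τ z' j.1‖ * ‖τ z' i - τ z i‖ := by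
                rw [norm_mul, norm_mul]
            _ ≤ dist z z' * b + b * dist z z' :=
                add_le_add (mul_le_mul hd1 hb1 (norm_nonneg _) dist_nonneg)
                  (mul_le_mul hb2 hd2 (norm_nonneg _) (Nat.cast_nonneg b))
            _ = 2 * b * dist z z' := by ring
        have hden : 1 / ((a : ℝ) + 1) * (1 / ((a : ℝ) + 1)) ≤ ‖τ z i‖ * ‖τ z' i‖ :=
          mul_le_mul hz1 hz'1 ha0.le (norm_nonneg _)
        have hcalc : dist (F z j) (F z' j) =
            ‖τ z j.1 * τ z' i - τ z i * τ z' j.1‖ / (‖τ z i‖ * ‖τ z' i‖) := by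
          rw [dist_eq_norm, hF]
          show ‖τ z j.1 / τ z i - τ z' j.1 / τ z' i‖ = _
          rw [div_sub_div _ _ hs0 hs'0, norm_div, norm_mul]
        rw [hcalc]
        have hstep : ‖τ z j.1 * τ z' i - τ z i * τ z' j.1‖ / (‖τ z i‖ * ‖τ z' i‖) ≤
            ‖τ z j.1 * τ z' i - τ z i * τ z' j.1‖ / (1 / ((a : ℝ) + 1) * (1 / ((a : ℝ) + 1))) :=
          div_le_div_of_nonneg_left (norm_nonneg _) (by positivity) hden
        refine hstep.trans ?_
        have heq : ‖τ z j.1 * τ z' i - τ z i * τ z' j.1‖ /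
            (1 / ((a : ℝ) + 1) * (1 / ((a : ℝ) + 1))) =
            ‖τ z j.1 * τ z' i - τ z i * τ z' j.1‖ * ((a : ℝ) + 1) ^ 2 := by
          rw [one_div, ← mul_inv, ← sq, div_eq_mul_inv, inv_inv]
        rw [heq, hKval]
        calc ‖τ z j.1 * τ z' i - τ z i * τ z' j.1‖ * ((a : ℝ) + 1) ^ 2
            ≤ 2 * b * dist z z' * ((a : ℝ) + 1) ^ 2 := by gcongr
          _ = 2 * b * ((a : ℝ) + 1) ^ 2 * dist z z' := by ring
      have hzero : μH[((2 : ℝ) + 2 * (Fintype.card {j : ι // j ≠ i} : ℝ))] (A a b) = 0 := by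
        rw [hsubcard i]
        exact measure_mono_null inter_subset_left hY
      exact eil hL hzero
    have hae2 : ∀ᵐ v ∂(volume : Measure ({j : ι // j ≠ i} → ℂ)),
        μH[(2 : ℝ)] (Y ∩ {z | τ z i ≠ 0} ∩ F ⁻¹' {v}) = 0 := by
      filter_upwards [ae_all_iff.mpr fun a => ae_all_iff.mpr fun b => hae a b] with v hv
      refine measure_mono_null (fun z hz => ?_)
        (measure_iUnion_null fun a => measure_iUnion_null fun b => hv a b)
      obtain ⟨⟨hzY, hzi⟩, hzv⟩ := hz
      have h0 : 0 < ‖τ z i‖ := norm_pos_iff.mpr hzi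
      obtain ⟨a, ha⟩ := exists_nat_one_div_lt h0
      obtain ⟨b, hb⟩ := exists_nat_ge ‖τ z‖
      exact mem_iUnion.mpr ⟨a, mem_iUnion.mpr ⟨b, ⟨⟨hzY, ha.le, hb⟩, hzv⟩⟩⟩
    obtain ⟨N, hN1, hN2, hN3⟩ := exists_measurable_superset_of_null (ae_iff.mp hae2)
    exact ⟨N, hN2, hN3, fun v hv => by
      by_contra h
      exact hv (hN1 h)⟩
  choose N hNmeas hN0 hNgood using main
  have pull : ∀ i : ι,
      volume {w : ι → ℂ | w i ≠ 0 ∧ (fun j : {j : ι // j ≠ i} => w j.1 / w i) ∈ N i} = 0 := by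
    intro i
    haveI := hsubne i
    set p : ι → Prop := fun j => j = i with hp
    have hmp := MeasureTheory.volume_preserving_piEquivPiSubtypeProd (fun _ : ι => ℂ) p
    set T : Set (({j // p j} → ℂ) × ({j // ¬ p j} → ℂ)) :=
      {y | y.1 ⟨i, rfl⟩ ≠ 0 ∧ (fun j => y.2 j / y.1 ⟨i, rfl⟩) ∈ N i} with hT
    have hTm : MeasurableSet T := by
      have h1 : MeasurableSet {y : ({j // p j} → ℂ) × ({j // ¬ p j} → ℂ) | y.1 ⟨i, rfl⟩ ≠ 0} := by
        have hm : Measurable fun y : (({j // p j} → ℂ) × ({j // ¬ p j} → ℂ)) =>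
            y.1 ⟨i, rfl⟩ := (measurable_pi_apply (⟨i, rfl⟩ : {j // p j})).comp measurable_fst
        exact hm (measurableSet_singleton (0 : ℂ)).compl
      have h2 : Measurable fun y : (({j // p j} → ℂ) × ({j // ¬ p j} → ℂ)) =>
          (fun j : {j // ¬ p j} => y.2 j / y.1 ⟨i, rfl⟩) :=
        measurable_pi_lambda _ fun j => ((measurable_pi_apply j).comp measurable_snd).div
          ((measurable_pi_apply (⟨i, rfl⟩ : {j // p j})).comp measurable_fst)
      exact h1.inter (h2 (hNmeas i))
    have hset : {w : ι → ℂ | w i ≠ 0 ∧ (fun j : {j : ι // j ≠ i} => w j.1 / w i) ∈ N i} =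
        (MeasurableEquiv.piEquivPiSubtypeProd (fun _ : ι => ℂ) p) ⁻¹' T := rfl
    rw [hset, hmp.measure_preimage hTm.nullMeasurableSet]
    rw [Measure.volume_eq_prod]
    refine (Measure.measure_prod_null hTm).mpr ?_
    refine Filter.Eventually.of_forall fun x => ?_
    show volume (Prod.mk x ⁻¹' T) = 0
    by_cases hx : x ⟨i, rfl⟩ = 0
    · have hempty : Prod.mk x ⁻¹' T = ∅ := by
        ext u
        simp only [mem_preimage, mem_empty_iff_false, iff_false]
        rintro ⟨h1, -⟩
        exact h1 hx
      rw [hempty, measure_empty]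
    set a : ℂ := x ⟨i, rfl⟩ with ha
    set e : ({j : ι // ¬ p j} → ℂ) ≃ₗ[ℝ] ({j : ι // ¬ p j} → ℂ) :=
      (LinearEquiv.smulOfNeZero ℂ _ a⁻¹ (inv_ne_zero hx)).restrictScalars ℝ with he
    have hdet : LinearMap.det (e.toLinearMap) ≠ 0 := e.isUnit_det'.ne_zero
    have hfun : (fun (u : {j : ι // ¬ p j} → ℂ) (j : {j : ι // ¬ p j}) => u j / a) =
        ⇑e.toLinearMap := by
      funext u j
      show u j / a = (a⁻¹ • u) j
      rw [Pi.smul_apply, smul_eq_mul, inv_mul_eq_div]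
    have hslice : Prod.mk x ⁻¹' T = ⇑e.toLinearMap ⁻¹' (N i) := by
      ext u
      constructor
      · rintro ⟨-, h⟩
        rw [mem_preimage, ← hfun]
        exact h
      · intro h
        rw [mem_preimage, ← hfun] at h
        exact ⟨hx, h⟩
    show volume (Prod.mk x ⁻¹' T) = 0
    rw [hslice, Measure.addHaar_preimage_linearMap volume hdet, hN0, mul_zero]
  have final : {w : ι → ℂ |
        ¬ μH[(2 : ℝ)] (Y ∩ {z | τ z ≠ 0 ∧ ∃ t : ℂ, t ≠ 0 ∧ τ z = t • w}) = 0}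
      ⊆ {w : ι → ℂ | w = 0} ∪
        ⋃ i : ι, {w : ι → ℂ | w i ≠ 0 ∧ (fun j : {j : ι // j ≠ i} => w j.1 / w i) ∈ N i} := by
    intro w hw
    by_contra hws
    simp only [mem_union, mem_iUnion, mem_setOf_eq, not_or, not_exists] at hws
    obtain ⟨hw0, hwi⟩ := hws
    obtain ⟨i, hi⟩ : ∃ i, w i ≠ 0 := by
      by_contra h; push_neg at h; exact hw0 (funext h)
    have hchart : (fun j : {j : ι // j ≠ i} => w j.1 / w i) ∉ N i := by
      intro h; exact hwi i ⟨hi, h⟩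
    have hkey := hNgood i _ hchart
    apply hw
    have hsets : Y ∩ {z | τ z ≠ 0 ∧ ∃ t : ℂ, t ≠ 0 ∧ τ z = t • w} =
        Y ∩ {z | τ z i ≠ 0} ∩ (fun z (j : {j : ι // j ≠ i}) => τ z j.1 / τ z i) ⁻¹'
          {(fun j : {j : ι // j ≠ i} => w j.1 / w i)} := by
      ext z
      simp only [mem_inter_iff, mem_setOf_eq, mem_preimage, mem_singleton_iff]
      constructor
      · rintro ⟨hzY, -, t, ht0, htw⟩
        have hzi : τ z i ≠ 0 := by
          have h := congrFun htw i
          rw [h]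
          exact mul_ne_zero ht0 hi
        refine ⟨⟨hzY, hzi⟩, ?_⟩
        funext j
        have h1 := congrFun htw j.1
        have h2 := congrFun htw i
        show τ z j.1 / τ z i = w j.1 / w i
        rw [h1, h2]
        show t * w j.1 / (t * w i) = w j.1 / w i
        exact mul_div_mul_left _ _ ht0
      · rintro ⟨⟨hzY, hzi⟩, hfz⟩
        have hτz : τ z ≠ 0 := fun h => hzi (by rw [h]; rfl)
        refine ⟨hzY, hτz, τ z i / w i, div_ne_zero hzi hi, ?_⟩
        funext x
        show τ z x = (τ z i / w i) * w x
        by_cases hx : x = i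
        · subst hx
          field_simp
        · have h3 := congrFun hfz ⟨x, hx⟩
          have h4 : τ z x / τ z i = w x / w i := h3
          rw [div_eq_div_iff hzi hi] at h4
          field_simp
          rw [h4]
          ring
    rw [hsets]
    exact hkey
  rw [ae_iff]
  refine measure_mono_null final (measure_union_null ?_ (measure_iUnion_null fun i => pull i))
  have h5 : {w : ι → ℂ | w = 0} = {0} := Set.setOf_eq_eq_singleton
  rw [h5]
  exact measure_singleton 0


theorem stmt13 (n k : ℕ) (hk : k + 1 < n) (Y : Set (Fin n → ℂ))
    (hY : μH[(2 * (n - k : ℝ))] Y = 0) :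
    ∀ᵐ w ∂(volume : Measure (Fin (n - k) → ℂ)),
      μH[(2 : ℝ)]
        (Y ∩ {z : Fin n → ℂ |
          (fun j : Fin (n - k) => z (Fin.cast (by omega) (j.addNat k))) ≠ 0 ∧
          ∃ t : ℂ, t ≠ 0 ∧
            (fun j : Fin (n - k) => z (Fin.cast (by omega) (j.addNat k))) = t • w}) = 0 := by
  have hkn : k ≤ n := by omega
  have hcast : n - k + k = n := by omega
  have hcard : 2 ≤ Fintype.card (Fin (n - k)) := by
    rw [Fintype.card_fin]; omega
  set τ : (Fin n → ℂ) → (Fin (n - k) → ℂ) :=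
    fun z (j : Fin (n - k)) => z (Fin.cast hcast (j.addNat k)) with hτdef
  have hτ : LipschitzWith 1 τ := by
    refine LipschitzWith.of_dist_le_mul fun z z' => ?_
    rw [NNReal.coe_one, one_mul]
    exact (dist_pi_le_iff dist_nonneg).mpr fun j => dist_le_pi_dist z z' _
  have hY' : μH[(2 * (Fintype.card (Fin (n - k)) : ℝ))] Y = 0 := by
    have : (2 * (Fintype.card (Fin (n - k)) : ℝ)) = 2 * ((n : ℝ) - k) := by
      rw [Fintype.card_fin, Nat.cast_sub hkn]
    rw [this]
    exact hY
  exact keyM hcard hτ hY'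
end

section
/- There exists a constant C₁ > 0 such that for every a ∈ ℂ with 0 < |a| < 1/6 and every holomorphic function h on the open unit disc Δ ⊂ ℂ satisfying h(0) = 0 and h(a) = 1, one has ∫_{Δ_{1/2}} |h|² dλ > C₁ · |a|^{-2}, where Δ_{1/2} is the disc of radius 1/2 and λ is planar Lebesgue measure. -/
open MeasureTheory Metric Set Real Complex intervalIntegral

lemma circle_bound (a : ℂ) (ha0 : 0 < ‖a‖) (ha6 : ‖a‖ < 1 / 6)
    (h : ℂ → ℂ) (hd : DifferentiableOn ℂ h (Metric.ball 0 1)) (h0 : h 0 = 0) (h1 : h a = 1)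
    (r : ℝ) (hr1 : 1 / 4 ≤ r) (hr2 : r ≤ 1 / 2) :
    2 * π * ((r - ‖a‖) / ‖a‖) ^ 2 ≤
      ∫ θ in (0:ℝ)..(2 * π), ‖h (circleMap 0 r θ)‖ ^ 2 := by
  set ε := ‖a‖ with hε
  have hr0 : 0 < r := by linarith
  have hεr : ε < r := by linarith
  have hsub : closedBall (0:ℂ) r ⊆ ball 0 1 := by
    intro z hz
    simp only [mem_closedBall, mem_ball, dist_zero_right] at hz ⊢
    linarith [hz]
  have hcont : ContinuousOn h (closedBall (0:ℂ) r) := hd.continuousOn.mono hsub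
  have hdc : DiffContOnCl ℂ h (ball (0:ℂ) r) :=
    ⟨hd.mono (ball_subset_ball (by linarith)), by
      rwa [closure_ball (0:ℂ) hr0.ne']⟩
  have hmema : a ∈ ball (0:ℂ) r := by
    simp only [mem_ball, dist_zero_right]
    exact lt_of_lt_of_le (by simpa using hεr) le_rfl
  have hmem0 : (0:ℂ) ∈ ball (0:ℂ) r := by simp [hr0]
  have C1 : (∮ z in C(0, r), (z - a)⁻¹ • h z) = (2 * π * Complex.I : ℂ) • h a :=
    hdc.circleIntegral_sub_inv_smul hmema
  have C2 : (∮ z in C(0, r), (z - 0)⁻¹ • h z) = (2 * π * Complex.I : ℂ) • h 0 :=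
    hdc.circleIntegral_sub_inv_smul hmem0
  -- integrability on the circle
  have hsph : ∀ z ∈ sphere (0:ℂ) r, z ≠ a ∧ z ≠ 0 := by
    intro z hz
    simp only [mem_sphere_iff_norm, sub_zero] at hz
    constructor
    · intro hza; rw [hza] at hz
      rw [← hε] at *; linarith [hz ▸ hεr]
    · intro hz0; rw [hz0] at hz; simp at hz; linarith
  have hsphsub : sphere (0:ℂ) r ⊆ ball (0:ℂ) 1 := sphere_subset_closedBall.trans hsub
  have hci1 : CircleIntegrable (fun z => (z - a)⁻¹ • h z) 0 r := by
    apply ContinuousOn.circleIntegrable hr0.le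
    apply ContinuousOn.fun_smul
    · apply ContinuousOn.inv₀ (by fun_prop)
      intro z hz
      exact sub_ne_zero.2 (hsph z hz).1
    · exact hd.continuousOn.mono hsphsub
  have hci2 : CircleIntegrable (fun z => (z - 0)⁻¹ • h z) 0 r := by
    apply ContinuousOn.circleIntegrable hr0.le
    apply ContinuousOn.fun_smul
    · apply ContinuousOn.inv₀ (by fun_prop)
      intro z hz
      exact sub_ne_zero.2 (hsph z hz).2
    · exact hd.continuousOn.mono hsphsub
  have Csub : (∮ z in C(0, r), ((z - a)⁻¹ • h z - (z - 0)⁻¹ • h z)) = (2 * π * Complex.I : ℂ) := by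
    rw [circleIntegral.integral_sub hci1 hci2, C1, C2, h0, h1]
    simp
  have hc : Continuous fun θ : ℝ => h (circleMap 0 r θ) :=
    hd.continuousOn.comp_continuous (continuous_circleMap 0 r)
      (fun θ => hsphsub (circleMap_mem_sphere 0 hr0.le θ))
  have hεr' : ε < r := hεr
  have hJ : (2*π : ℝ) ≤ (ε/(r-ε)) * ∫ θ in (0:ℝ)..(2*π), ‖h (circleMap 0 r θ)‖ := by
    have habs : ∀ θ : ℝ, ‖circleMap 0 r θ‖ = r := by
      intro θ; rw [norm_circleMap_zero, abs_of_pos hr0]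
    have hza' : ∀ θ : ℝ, circleMap 0 r θ - a ≠ 0 := by
      intro θ hh
      have h2 : circleMap 0 r θ = a := sub_eq_zero.1 hh
      have h3 : (r:ℝ) = ε := by rw [hε, ← h2, habs]
      linarith
    have hz0' : ∀ θ : ℝ, circleMap 0 r θ ≠ 0 := by
      intro θ hh
      have := habs θ; rw [hh] at this; simp at this; linarith
    have key : ∀ θ : ℝ,
        ‖deriv (circleMap 0 r) θ • ((circleMap 0 r θ - a)⁻¹ • h (circleMap 0 r θ)
          - (circleMap 0 r θ - 0)⁻¹ • h (circleMap 0 r θ))‖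
        ≤ (ε/(r-ε)) * ‖h (circleMap 0 r θ)‖ := by
      intro θ
      set z := circleMap 0 r θ with hz
      have hzr : ‖z‖ = r := habs θ
      have hza : z - a ≠ 0 := hza' θ
      have hz0 : z ≠ 0 := hz0' θ
      have hfrac : (z - a)⁻¹ - z⁻¹ = a / ((z - a) * z) := by
        field_simp
        ring
      have hcomb : (z - a)⁻¹ • h z - (z - 0)⁻¹ • h z = (a / ((z - a) * z)) * h z := by
        rw [sub_zero, smul_eq_mul, smul_eq_mul, ← sub_mul, hfrac]
      rw [hcomb, norm_smul, deriv_circleMap]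
      have hderiv : ‖circleMap 0 r θ * Complex.I‖ = r := by
        simp [abs_of_pos hr0]
      rw [hderiv, norm_mul, norm_div, norm_mul]
      have hzab : ‖z - a‖ ≥ r - ε := by
        have := norm_sub_norm_le z a
        rw [hzr, ← hε] at this
        linarith
      simp only [hzr]
      have hle : ‖a‖ / (‖z - a‖ * r) ≤ ε / ((r - ε) * r) := by
        rw [← hε]
        apply div_le_div_of_nonneg_left ha0.le (by nlinarith)
        exact mul_le_mul_of_nonneg_right hzab hr0.le
      calc r * (‖a‖ / (‖z - a‖ * r) * ‖h z‖)
          ≤ r * (ε / ((r - ε) * r) * ‖h z‖) := by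
            apply mul_le_mul_of_nonneg_left _ hr0.le
            exact mul_le_mul_of_nonneg_right hle (by positivity)
        _ = ε / (r - ε) * ‖h z‖ := by
            have heq : r * (ε / ((r - ε) * r) * ‖h z‖)
                = (r * ε) / (r * (r - ε)) * ‖h z‖ := by
              rw [mul_comm (r - ε) r]; ring
            rw [heq, mul_div_mul_left _ _ hr0.ne']
    have h2pi : (0:ℝ) ≤ 2 * π := by positivity
    have hG : Continuous fun θ : ℝ => deriv (circleMap 0 r) θ • ((circleMap 0 r θ - a)⁻¹ • h (circleMap 0 r θ)
          - (circleMap 0 r θ - 0)⁻¹ • h (circleMap 0 r θ)) := by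
      simp only [deriv_circleMap, sub_zero]
      apply Continuous.fun_smul
      · exact (continuous_circleMap 0 r).mul continuous_const
      · apply Continuous.sub
        · exact (((continuous_circleMap 0 r).sub continuous_const).inv₀ hza').smul hc
        · exact ((continuous_circleMap 0 r).inv₀ hz0').smul hc
    calc (2*π : ℝ) = ‖(2 * π * Complex.I : ℂ)‖ := by
          simp [_root_.abs_of_nonneg pi_pos.le]
      _ = ‖∮ z in C(0, r), ((z - a)⁻¹ • h z - (z - 0)⁻¹ • h z)‖ := by rw [Csub]
      _ = ‖∫ θ in (0:ℝ)..(2*π), deriv (circleMap 0 r) θ • ((circleMap 0 r θ - a)⁻¹ • h (circleMap 0 r θ)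
          - (circleMap 0 r θ - 0)⁻¹ • h (circleMap 0 r θ))‖ := rfl
      _ ≤ ∫ θ in (0:ℝ)..(2*π), ‖deriv (circleMap 0 r) θ • ((circleMap 0 r θ - a)⁻¹ • h (circleMap 0 r θ)
          - (circleMap 0 r θ - 0)⁻¹ • h (circleMap 0 r θ))‖ :=
          intervalIntegral.norm_integral_le_integral_norm h2pi
      _ ≤ ∫ θ in (0:ℝ)..(2*π), (ε/(r-ε)) * ‖h (circleMap 0 r θ)‖ := by
          apply intervalIntegral.integral_mono_on h2pi
          · exact hG.norm.intervalIntegrable _ _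
          · exact (continuous_const.mul (continuous_norm.comp hc)).intervalIntegrable _ _
          · exact fun θ _ => key θ
      _ = (ε/(r-ε)) * ∫ θ in (0:ℝ)..(2*π), ‖h (circleMap 0 r θ)‖ := by
          rw [intervalIntegral.integral_const_mul]
  set J := ∫ θ in (0:ℝ)..(2*π), ‖h (circleMap 0 r θ)‖ with hJdef
  set K := ∫ θ in (0:ℝ)..(2*π), ‖h (circleMap 0 r θ)‖ ^ 2 with hKdef
  set M := (r - ε)/ε with hMdef
  have hM0 : 0 < M := by apply div_pos <;> linarith
  have hprod : (ε/(r-ε)) * M = 1 := by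
    rw [hMdef, div_mul_div_comm, mul_comm (r-ε) ε,
      div_self (ne_of_gt (mul_pos ha0 (by linarith)))]
  have hJlb : 2*π*M ≤ J := by
    have h1 : 2*π*M ≤ (ε/(r-ε)) * J * M := mul_le_mul_of_nonneg_right hJ hM0.le
    have h2 : (ε/(r-ε)) * J * M = J * ((ε/(r-ε)) * M) := by ring
    rw [h2, hprod, mul_one] at h1
    exact h1
  have hcabs : Continuous fun θ : ℝ => ‖h (circleMap 0 r θ)‖ :=
    continuous_norm.comp hc
  have hJub : J ≤ π*M + K/(2*M) := by
    have hpt : ∀ θ : ℝ, ‖h (circleMap 0 r θ)‖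
        ≤ M/2 + ‖h (circleMap 0 r θ)‖ ^ 2 / (2*M) := by
      intro θ
      set x := ‖h (circleMap 0 r θ)‖
      have hid : M/2 + x^2/(2*M) - x = (x - M)^2 / (2*M) := by
        field_simp
        ring
      have hnn : (0:ℝ) ≤ (x - M)^2 / (2*M) := div_nonneg (sq_nonneg _) (by linarith)
      linarith
    have hint : J ≤ ∫ θ in (0:ℝ)..(2*π), (M/2 + ‖h (circleMap 0 r θ)‖ ^ 2 / (2*M)) := by
      apply intervalIntegral.integral_mono_on (by positivity)
      · exact hcabs.intervalIntegrable _ _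
      · exact (continuous_const.add ((hcabs.pow 2).div_const _)).intervalIntegrable _ _
      · exact fun θ _ => hpt θ
    have hsplit : (∫ θ in (0:ℝ)..(2*π), (M/2 + ‖h (circleMap 0 r θ)‖ ^ 2 / (2*M)))
        = π*M + K/(2*M) := by
      rw [intervalIntegral.integral_add (f := fun _ => M/2) (g := fun θ => ‖h (circleMap 0 r θ)‖ ^ 2 / (2*M)) (intervalIntegrable_const)
        (((hcabs.pow 2).div_const _).intervalIntegrable _ _),
        intervalIntegral.integral_const, intervalIntegral.integral_div]
      simp only [smul_eq_mul, sub_zero]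
      ring
    linarith [hsplit ▸ hint]
  have h5 : π*M*(2*M) ≤ K := by
    have h4 : π*M ≤ K/(2*M) := by linarith
    have := mul_le_mul_of_nonneg_right h4 (by linarith : (0:ℝ) ≤ 2*M)
    rwa [div_mul_cancel₀ _ (by positivity : (2*M : ℝ) ≠ 0)] at this
  have : 2*π*M^2 = π*M*(2*M) := by ring
  linarith

theorem stmt14 :
    ∃ C₁ : ℝ, 0 < C₁ ∧
      ∀ a : ℂ, 0 < ‖a‖ → ‖a‖ < 1 / 6 →
        ∀ h : ℂ → ℂ, DifferentiableOn ℂ h (Metric.ball 0 1) → h 0 = 0 → h a = 1 →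
          C₁ / ‖a‖ ^ 2 < ∫ z in Metric.ball (0 : ℂ) (1 / 2), ‖h z‖ ^ 2 := by
  refine ⟨1/500, by norm_num, ?_⟩
  intro a ha0 ha6 h hd h0 h1
  set ε := ‖a‖ with hεdef
  set f : ℂ → ℝ := fun z => ‖h z‖ ^ 2 with hfdef
  have hsub : closedBall (0:ℂ) (1/2) ⊆ ball 0 1 := by
    intro z hz
    simp only [mem_closedBall, mem_ball, dist_zero_right] at hz ⊢
    linarith
  have hfc : ContinuousOn f (closedBall (0:ℂ) (1/2)) :=
    (continuous_norm.comp_continuousOn (hd.continuousOn.mono hsub)).pow 2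
  have hInt : IntegrableOn f (closedBall (0:ℂ) (1/2)) :=
    hfc.integrableOn_compact (isCompact_closedBall _ _)
  set S : Set ℂ := ball (0:ℂ) (1/2) \ closedBall 0 (1/4) with hSdef
  have hSm : MeasurableSet S := measurableSet_ball.diff measurableSet_closedBall
  -- Step 1 : annulus integral ≤ ball integral
  have step1 : ∫ z in S, f z ≤ ∫ z in ball (0:ℂ) (1/2), f z := by
    apply setIntegral_mono_set (hInt.mono_set ball_subset_closedBall)
    · exact Filter.Eventually.of_forall fun z => by positivity
    · exact HasSubset.Subset.eventuallyLE diff_subset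
  -- Polar coordinates
  set T : Set (ℝ × ℝ) := Ioo (1/4:ℝ) (1/2) ×ˢ Ioo (-π) π with hTdef
  have hTm : MeasurableSet T := measurableSet_Ioo.prod measurableSet_Ioo
  have hsymm_abs : ∀ p : ℝ × ℝ, 0 < p.1 → ‖Complex.polarCoord.symm p‖ = p.1 := by
    intro p hp
    rw [Complex.norm_polarCoord_symm, _root_.abs_of_pos hp]
  have hmemS : ∀ p : ℝ × ℝ, 0 < p.1 →
      (Complex.polarCoord.symm p ∈ S ↔ p.1 ∈ Ioo (1/4:ℝ) (1/2)) := by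
    intro p hp
    simp only [hSdef, mem_diff, mem_ball, mem_closedBall, dist_zero_right,
      hsymm_abs p hp, mem_Ioo, not_le]
    tauto
  have step2 : ∫ z in S, f z = ∫ p in T, p.1 * f (Complex.polarCoord.symm p) := by
    have hpolar := Complex.integral_comp_polarCoord_symm (S.indicator f)
    rw [MeasureTheory.integral_indicator hSm] at hpolar
    rw [← hpolar, ← MeasureTheory.integral_indicator polarCoord.open_target.measurableSet,
      ← MeasureTheory.integral_indicator hTm]
    congr 1
    funext p
    by_cases hpT : p ∈ T
    · have hptarget : p ∈ polarCoord.target := by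
        rw [polarCoord_target]
        rcases hpT with ⟨h1', h2'⟩
        exact ⟨mem_Ioi.2 (by rcases h1' with ⟨hl, _⟩; linarith), h2'⟩
      rw [indicator_of_mem hptarget, indicator_of_mem hpT,
        indicator_of_mem ((hmemS p (by rcases hpT.1 with ⟨hl, _⟩; linarith)).2 hpT.1)]
      simp [smul_eq_mul]
    · rw [indicator_of_notMem hpT]
      by_cases hptarget : p ∈ polarCoord.target
      · rw [indicator_of_mem hptarget]
        have hp1 : 0 < p.1 := by
          rw [polarCoord_target] at hptarget; exact hptarget.1
        have hnotS : Complex.polarCoord.symm p ∉ S := by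
          rw [hmemS p hp1]
          intro hmem
          apply hpT
          rw [polarCoord_target] at hptarget
          exact ⟨hmem, hptarget.2⟩
        rw [indicator_of_notMem hnotS, smul_zero]
      · rw [indicator_of_notMem hptarget]
  -- Fubini
  set F : ℝ × ℝ → ℝ := fun p => p.1 * f (Complex.polarCoord.symm p) with hFdef
  have hGc : Continuous fun p : ℝ × ℝ => Complex.polarCoord.symm p := by
    have : (fun p : ℝ × ℝ => Complex.polarCoord.symm p)
        = fun p : ℝ × ℝ => (p.1 : ℂ) * ((Real.cos p.2 : ℂ) + (Real.sin p.2 : ℂ) * Complex.I) := by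
      funext p; exact Complex.polarCoord_symm_apply p
    rw [this]; fun_prop
  have hmaps : MapsTo (fun p : ℝ × ℝ => Complex.polarCoord.symm p)
      (Icc (1/4:ℝ) (1/2) ×ˢ Icc (-π) π) (ball (0:ℂ) 1) := by
    intro p hp
    simp only [mem_ball, dist_zero_right]
    rw [Complex.norm_polarCoord_symm]
    rcases hp with ⟨⟨hl, hr⟩, _⟩
    rw [_root_.abs_of_pos (by linarith)]
    linarith
  have hFc : ContinuousOn F (Icc (1/4:ℝ) (1/2) ×ˢ Icc (-π) π) := by
    apply ContinuousOn.mul continuous_fst.continuousOn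
    exact (continuous_norm.comp_continuousOn
      (hd.continuousOn.comp hGc.continuousOn hmaps)).pow 2
  have hFint : IntegrableOn F T := by
    apply (hFc.integrableOn_compact (isCompact_Icc.prod isCompact_Icc)).mono_set
    exact prod_mono Ioo_subset_Icc_self Ioo_subset_Icc_self
  have hFint' : Integrable F ((volume.restrict (Ioo (1/4:ℝ) (1/2))).prod
      (volume.restrict (Ioo (-π) π))) := by
    rw [Measure.prod_restrict]
    rw [← Measure.volume_eq_prod]
    exact hFint
  have step3 : ∫ p in T, F p
      = ∫ x in Ioo (1/4:ℝ) (1/2), ∫ y in Ioo (-π) π, F (x, y) := by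
    rw [hTdef, Measure.volume_eq_prod, setIntegral_prod]
    rw [← Measure.volume_eq_prod]
    exact hFint
  have hsymm_eq : ∀ x y : ℝ, Complex.polarCoord.symm (x, y) = circleMap 0 x y := by
    intro x y
    rw [Complex.polarCoord_symm_apply, circleMap_zero, Complex.exp_mul_I,
      Complex.ofReal_cos, Complex.ofReal_sin]
  have step4 : ∀ x ∈ Ioo (1/4:ℝ) (1/2),
      π/(288*ε^2) ≤ ∫ y in Ioo (-π) π, F (x, y) := by
    intro x hx
    obtain ⟨hx1, hx2⟩ := hx
    have hKx := circle_bound a ha0 ha6 h hd h0 h1 x hx1.le hx2.le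
    have e1 : (∫ y in Ioo (-π) π, F (x, y))
        = x * ∫ y in (0:ℝ)..(2*π), ‖h (circleMap 0 x y)‖ ^ 2 := by
      have hFxy : ∀ y : ℝ, F (x, y) = x * ‖h (circleMap 0 x y)‖ ^ 2 := by
        intro y
        simp only [hFdef, hfdef, hsymm_eq]
      simp_rw [hFxy]
      rw [MeasureTheory.integral_const_mul]
      congr 1
      rw [← MeasureTheory.integral_Ioc_eq_integral_Ioo,
        ← intervalIntegral.integral_of_le (by linarith [pi_pos] : -π ≤ π)]
      have hper : Function.Periodic (fun y : ℝ => ‖h (circleMap 0 x y)‖ ^ 2) (2*π) := by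
        intro y
        simp [(periodic_circleMap 0 x) y]
      have heq := hper.intervalIntegral_add_eq (-π) 0
      simpa [show -π + 2*π = π by ring] using heq
    rw [e1]
    have hεx : ε < x := by linarith
    have hsq : (1/(12*ε))^2 ≤ ((x-ε)/ε)^2 := by
      apply pow_le_pow_left₀ (by positivity)
      rw [show (1:ℝ)/(12*ε) = (1/12)/ε by rw [div_div]]
      exact (div_le_div_iff_of_pos_right ha0).2 (by linarith)
    calc π/(288*ε^2) = (1/4) * (2*π*(1/(12*ε))^2) := by
          field_simp
          ring
      _ ≤ x * (2*π*((x-ε)/ε)^2) := by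
          apply mul_le_mul hx1.le
          · exact mul_le_mul_of_nonneg_left hsq (by positivity)
          · positivity
          · linarith
      _ ≤ x * ∫ y in (0:ℝ)..(2*π), ‖h (circleMap 0 x y)‖ ^ 2 :=
          mul_le_mul_of_nonneg_left hKx (by linarith)
  have hinner_int : IntegrableOn (fun x => ∫ y in Ioo (-π) π, F (x, y)) (Ioo (1/4:ℝ) (1/2)) :=
    hFint'.integral_prod_left
  have hvol : (volume (Ioo (1/4:ℝ) (1/2))).toReal = 1/4 := by
    rw [Real.volume_Ioo]
    rw [ENNReal.toReal_ofReal (by norm_num)]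
    norm_num
  have step5 : π/(288*ε^2) * (1/4) ≤ ∫ x in Ioo (1/4:ℝ) (1/2), ∫ y in Ioo (-π) π, F (x, y) := by
    have h5 := setIntegral_ge_of_const_le measurableSet_Ioo measure_Ioo_lt_top.ne step4 hinner_int
    rw [measureReal_def, hvol, smul_eq_mul] at h5
    linarith
  have hε2 : (0:ℝ) < ε^2 := by positivity
  calc (1:ℝ)/500 / ε^2 < π/1152 / ε^2 := by
        apply (div_lt_div_iff_of_pos_right hε2).2
        rw [div_lt_div_iff₀ (by norm_num) (by norm_num)]
        nlinarith [Real.pi_gt_three]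
    _ = π/(288*ε^2) * (1/4) := by
        ring
    _ ≤ ∫ x in Ioo (1/4:ℝ) (1/2), ∫ y in Ioo (-π) π, F (x, y) := step5
    _ = ∫ p in T, F p := step3.symm
    _ = ∫ z in S, f z := step2.symm
    _ ≤ ∫ z in ball (0:ℂ) (1/2), f z := step1
end
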